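/- Let K be a compact Hausdorff space that is not perfectly normal, i.e., K has a closed subset that is not a Gδ set. Then there exists an uncountable set A of norm-one functions in C(K) with ‖f − g‖ = 2 for all distinct f, g ∈ A (an uncountable 2-separated, hence 2-equilateral, subset of the unit sphere). -/

import Mathlib

open Set Ordinal Cardinal

section Aux

variable {K : Type*} [TopologicalSpace K] [CompactSpace K] [T2Space K] [Nonempty K]

/-- condition at stage α given history `prev` -/
def eqCond (F : Set K) (α : Ordinal) (prev : ∀ β, β < α → C(K, ℝ) × K)
    (p : C(K, ℝ) × K) : Prop :=
  (∀ x ∈ F, p.1 x = 0) ∧ p.1 p.2 = 1 ∧ (∀ x, p.1 x ∈ Set.Icc (0:ℝ) 1) ∧ p.2 ∉ F ∧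
    ∀ β (hβ : β < α), (prev β hβ).1 p.2 = 0

open Classical in
noncomputable def eqAux (F : Set K) : Ordinal → C(K, ℝ) × K :=
  WellFounded.fix Ordinal.lt_wf
    (fun α prev =>
      if h : ∃ p : C(K, ℝ) × K, eqCond F α prev p then h.choose
      else ⟨0, Classical.arbitrary K⟩)

set_option linter.unusedSectionVars false in
open Classical in
lemma eqAux_def (F : Set K) (α : Ordinal) :
    eqAux F α =
      if h : ∃ p : C(K, ℝ) × K, eqCond F α (fun β _ => eqAux F β) p then h.choose
      else ⟨0, Classical.arbitrary K⟩ := by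
  rw [eqAux, WellFounded.fix_eq]

lemma zeroSet_isGδ (f : C(K, ℝ)) : IsGδ ((⇑f) ⁻¹' {0}) := by
  have hEq : (⇑f) ⁻¹' {0} = ⋂ n : ℕ, (⇑f) ⁻¹' (Metric.ball 0 (1 / (n + 1))) := by
    ext x
    simp only [mem_preimage, mem_singleton_iff, mem_iInter, Metric.mem_ball, dist_zero_right,
      Real.norm_eq_abs]
    constructor
    · intro h n
      rw [h, abs_zero]
      positivity
    · intro h
      by_contra hx
      obtain ⟨n, hn⟩ := exists_nat_one_div_lt (abs_pos.mpr hx)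
      exact absurd (h n) (not_lt.mpr hn.le)
  rw [hEq]
  exact .iInter_of_isOpen fun n => Metric.isOpen_ball.preimage f.continuous

lemma eqAux_spec (F : Set K) (hF : IsClosed F) (hGδ : ¬ IsGδ F) :
    ∀ α : Ordinal, α < (Cardinal.aleph 1).ord →
      eqCond F α (fun β _ => eqAux F β) (eqAux F α) := by
  intro α
  induction α using Ordinal.induction with
  | h α IH =>
    intro hα
    have hex : ∃ p : C(K, ℝ) × K, eqCond F α (fun β _ => eqAux F β) p := by
      set S : Set K := ⋂ β ∈ Set.Iio α, ((eqAux F β).1 ⁻¹' {0}) with hSdef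
      have hScnt : (Set.Iio α).Countable := by
        rw [Cardinal.countable_iff_lt_aleph_one, Ordinal.mk_Iio_ordinal]
        have : α.card < Cardinal.aleph 1 := (Cardinal.lt_ord).mp hα
        rwa [Cardinal.lift_lt_aleph_one]
      have hSGδ : IsGδ S := IsGδ.biInter hScnt fun β _ => zeroSet_isGδ _
      have hFS : F ⊆ S := by
        intro x hx
        refine Set.mem_biInter fun β hβ => ?_
        exact (IH β hβ (hβ.trans hα)).1 x hx
      have hne : F ≠ S := fun h => hGδ (h ▸ hSGδ)
      obtain ⟨y, hyS, hyF⟩ : ∃ y, y ∈ S ∧ y ∉ F := by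
        by_contra h
        push_neg at h
        exact hne (Set.Subset.antisymm hFS h)
      obtain ⟨f, hf0, hf1, hf01⟩ :=
        exists_continuous_zero_one_of_isClosed hF (isClosed_singleton (x := y))
          (Set.disjoint_singleton_right.mpr hyF)
      refine ⟨⟨f, y⟩, fun x hx => hf0 hx, hf1 rfl, hf01, hyF, fun β hβ => ?_⟩
      exact Set.mem_iInter₂.mp hyS β hβ
    rw [eqAux_def]
    have := hex
    rw [dif_pos hex]
    exact hex.choose_spec

end Aux

/-- Let `K` be a compact Hausdorff space that is not perfectly normal, i.e.
`K` has a closed subset that is not a `Gδ` set.  Then there exists an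
uncountable set `A` of norm-one functions in `C(K)` with `‖f − g‖ = 2` for all
distinct `f, g ∈ A`. -/
theorem uncountable_equilateral_of_not_perfectly_normal
    (K : Type*) [TopologicalSpace K] [CompactSpace K] [T2Space K]
    (hK : ∃ F : Set K, IsClosed F ∧ ¬ IsGδ F) :
    ∃ A : Set C(K, ℝ), ¬ A.Countable ∧ (∀ f ∈ A, ‖f‖ = 1) ∧
      ∀ f ∈ A, ∀ g ∈ A, f ≠ g → ‖f - g‖ = 2 := by
  obtain ⟨F, hF, hGδ⟩ := hK
  have hKne : Nonempty K := by
    by_contra h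
    rw [not_nonempty_iff] at h
    exact hGδ (by simpa [Set.eq_empty_of_isEmpty F] using IsGδ.empty)
  -- the transfinite family
  set φ : Ordinal.{0} → C(K, ℝ) := fun α => (2 : ℝ) • (eqAux F α).1 - ContinuousMap.const K 1
    with hφ
  have spec := eqAux_spec F hF hGδ
  -- values of φ
  have hval : ∀ α (x : K), φ α x = 2 * (eqAux F α).1 x - 1 := by
    intro α x; simp [hφ]
  have hmem : ∀ α, α < (Cardinal.aleph 1).ord → ∀ x, |φ α x| ≤ 1 := by
    intro α hα x
    have h01 := (spec α hα).2.2.1 x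
    rw [hval]
    rw [abs_le]
    constructor <;> nlinarith [h01.1, h01.2]
  have hat : ∀ α, α < (Cardinal.aleph 1).ord → φ α (eqAux F α).2 = 1 := by
    intro α hα
    rw [hval, (spec α hα).2.1]; ring
  have hbelow : ∀ β α, β < α → α < (Cardinal.aleph 1).ord → φ β (eqAux F α).2 = -1 := by
    intro β α hβα hα
    rw [hval, (spec α hα).2.2.2.2 β hβα]; ring
  -- norms
  have hnorm1 : ∀ α, α < (Cardinal.aleph 1).ord → ‖φ α‖ = 1 := by
    intro α hα
    refine le_antisymm ((ContinuousMap.norm_le _ zero_le_one).mpr fun x => by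
      simpa [Real.norm_eq_abs] using hmem α hα x) ?_
    calc (1 : ℝ) = ‖φ α (eqAux F α).2‖ := by rw [hat α hα]; simp
    _ ≤ ‖φ α‖ := ContinuousMap.norm_coe_le_norm _ _
  have hdist : ∀ β α, β < α → α < (Cardinal.aleph 1).ord → ‖φ α - φ β‖ = 2 := by
    intro β α hβα hα
    have hβ : β < (Cardinal.aleph 1).ord := hβα.trans hα
    refine le_antisymm ((ContinuousMap.norm_le _ (by norm_num)).mpr fun x => ?_) ?_
    · have h1 := hmem α hα x
      have h2 := hmem β hβ x
      simp only [ContinuousMap.sub_apply, Real.norm_eq_abs]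
      rw [abs_le] at *
      constructor <;> linarith [h1.1, h1.2, h2.1, h2.2]
    · calc (2 : ℝ) = ‖(φ α - φ β) (eqAux F α).2‖ := by
            simp [hat α hα, hbelow β α hβα hα]; norm_num
      _ ≤ ‖φ α - φ β‖ := ContinuousMap.norm_coe_le_norm _ _
  have hinj : Set.InjOn φ (Set.Iio ((Cardinal.aleph 1).ord)) := by
    intro β hβ α hα hEq
    by_contra hne
    rcases lt_or_gt_of_ne hne with h | h
    · have := hdist β α h hα
      rw [hEq] at this; simp at this
    · have := hdist α β h hβ
      rw [hEq] at this; simp at this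
  refine ⟨φ '' Set.Iio ((Cardinal.aleph 1).ord), ?_, ?_, ?_⟩
  · intro hcnt
    have : (Set.Iio ((Cardinal.aleph 1).ord)).Countable :=
      Set.countable_of_injective_of_countable_image hinj hcnt
    rw [Cardinal.countable_iff_lt_aleph_one, Ordinal.mk_Iio_ordinal] at this
    rw [Cardinal.card_ord, Cardinal.lift_lt_aleph_one] at this
    exact lt_irrefl _ this
  · rintro f ⟨α, hα, rfl⟩
    exact hnorm1 α hα
  · rintro f ⟨α, hα, rfl⟩ g ⟨β, hβ, rfl⟩ hne
    rcases lt_or_gt_of_ne (fun h : α = β => hne (by rw [h])) with h | h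
    · rw [← norm_neg, neg_sub]; exact hdist α β h hβ
    · exact hdist β α h hα
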